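/- Let X be a Priestley space and A ⊆ X a subset. Then the upward closure of the topological closure of A equals the intersection of all clopen up-sets of X containing A. -/
import Mathlib


/-- In a Priestley space `X` (compact, totally order-disconnected),
for any subset `A`, the upward closure of the topological closure of `A` equals the
intersection of all clopen up-sets containing `A`. -/
theorem stmt_0 {X : Type*} [TopologicalSpace X] [PartialOrder X] [CompactSpace X]
    (htod : ∀ x y : X, ¬x ≤ y → ∃ U : Set X, IsClopen U ∧ IsUpperSet U ∧ x ∈ U ∧ y ∉ U)
    (A : Set X) :
    (upperClosure (closure A) : Set X) =
      ⋂₀ {U : Set X | IsClopen U ∧ IsUpperSet U ∧ A ⊆ U} := by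
  ext y
  simp only [Set.mem_sInter, Set.mem_setOf_eq, SetLike.mem_coe, mem_upperClosure]
  constructor
  · rintro ⟨x, hx, hxy⟩ U ⟨hUc, hUu, hAU⟩
    exact hUu hxy (closure_minimal hAU hUc.isClosed hx)
  · intro hy
    by_contra hne
    push_neg at hne
    -- for each x in closure A, choose a clopen upset containing x missing y
    choose U hUc hUu hxU hyU using fun x : closure A => htod x y (hne x x.2)
    have hcov : closure A ⊆ ⋃ x : closure A, U x := fun x hx =>
      Set.mem_iUnion.2 ⟨⟨x, hx⟩, hxU ⟨x, hx⟩⟩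
    obtain ⟨t, ht⟩ := (isClosed_closure.isCompact).elim_finite_subcover U
      (fun x => (hUc x).isOpen) hcov
    have hmem : y ∈ ⋃ x ∈ t, U x := by
      refine hy _ ⟨?_, ?_, ?_⟩
      · exact t.finite_toSet.isClopen_biUnion (fun x _ => hUc x)
      · exact isUpperSet_iUnion₂ (fun x _ => hUu x)
      · exact subset_closure.trans ht
    obtain ⟨x, _, hxmem⟩ := Set.mem_iUnion₂.1 hmem
    exact hyU x hxmem
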